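/- Any rational numbers $Q_j, u_j, d_j, L_j, e_j, \nu_j$ ($j=1,2,3$), $H_1, H_2$ satisfying the seesaw 2HDM system (†) are uniquely determined: $Q = (\tfrac{274}{135}, \tfrac{139}{135}, -\tfrac{131}{135})$, $u = (\tfrac{364}{135}, \tfrac{94}{135}, -\tfrac{176}{135})$, $d = (-\tfrac{64}{45}, -\tfrac{109}{45}, -\tfrac{109}{45})$, $L = (-\tfrac{232}{135}, -\tfrac{307}{135}, -\tfrac{307}{135})$, $e = (\tfrac{449}{135}, -\tfrac{16}{135}, -\tfrac{151}{135})$, $\nu = (1, 0, 0)$, $H_1 = -\tfrac{863}{135}$, $H_2 = \tfrac{307}{135}$. -/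
import Mathlib


/-- The seesaw 2HDM system (†): anomaly conditions (with the cubic and gravitational
anomalies assumed to vanish by SM-neutral fermion content), no kinetic mixing, and the
Froggatt-Nielsen phenomenological constraints including the seesaw neutrino sector. -/
def SystemDagger (Q u d L e ν : Fin 3 → ℚ) (H₁ H₂ : ℚ) : Prop :=
  (∑ j, (Q j ^ 2 - 2 * u j ^ 2 + d j ^ 2 - L j ^ 2 + e j ^ 2)) = 0 ∧
  (∑ j, (Q j + 8 * u j + 2 * d j + 3 * L j + 6 * e j)) = 0 ∧
  (∑ j, (2 * Q j + u j + d j)) = 0 ∧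
  (∑ j, (3 * Q j + L j)) = 0 ∧
  (∑ j, (2 * Q j - 4 * u j + 2 * d j - 2 * L j + 2 * e j)) = 0 ∧
  Q 2 + u 2 + H₂ = 0 ∧ Q 1 + u 1 + H₂ = 4 ∧ Q 0 + u 0 + H₂ = 7 ∧
  Q 2 + d 2 - H₁ = 3 ∧ Q 1 + d 1 - H₁ = 5 ∧ Q 0 + d 0 - H₁ = 7 ∧
  L 2 + e 2 - H₁ = 3 ∧ L 1 + e 1 - H₁ = 4 ∧ L 0 + e 0 - H₁ = 8 ∧
  Q 0 - Q 1 = 1 ∧ Q 1 - Q 2 = 2 ∧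
  L 1 - L 2 = 0 ∧ L 1 + ν 1 + H₂ = 0 ∧
  ν 0 = 1 ∧ ν 1 = 0 ∧ ν 2 = 0

set_option maxHeartbeats 1000000 in
/-- Any rational solution of the seesaw 2HDM system (†) is uniquely determined. -/
theorem systemDagger_unique (Q u d L e ν : Fin 3 → ℚ) (H₁ H₂ : ℚ)
    (h : SystemDagger Q u d L e ν H₁ H₂) :
    Q = ![274/135, 139/135, -131/135] ∧ u = ![364/135, 94/135, -176/135] ∧
    d = ![-64/45, -109/45, -109/45] ∧ L = ![-232/135, -307/135, -307/135] ∧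
    e = ![449/135, -16/135, -151/135] ∧ ν = ![1, 0, 0] ∧
    H₁ = -863/135 ∧ H₂ = 307/135 := by
  obtain ⟨h1, h2, h3, h4, h5, ha, hb, hc, hd, he, hf, hg, hh, hi, hj, hk, hl, hm, hn, ho, hp⟩ := h
  simp only [Fin.sum_univ_three] at h1 h2 h3 h4 h5
  have hQ0 : Q 0 = (19/6) + (-1/2) * H₂ := by linear_combination (-1/144) * h2 + (-1/36) * h3 + (1/16) * h4 + (1/48) * h5 + (1/6) * ha + (1/6) * hb + (1/6) * hc + (2/3) * hj + (1/3) * hk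
  have hQ1 : Q 1 = (13/6) + (-1/2) * H₂ := by linear_combination (-1/144) * h2 + (-1/36) * h3 + (1/16) * h4 + (1/48) * h5 + (1/6) * ha + (1/6) * hb + (1/6) * hc + (-1/3) * hj + (1/3) * hk
  have hQ2 : Q 2 = (1/6) + (-1/2) * H₂ := by linear_combination (-1/144) * h2 + (-1/36) * h3 + (1/16) * h4 + (1/48) * h5 + (1/6) * ha + (1/6) * hb + (1/6) * hc + (-1/3) * hj + (-2/3) * hk
  have hu0 : u 0 = (23/6) + (-1/2) * H₂ := by linear_combination (1/144) * h2 + (1/36) * h3 + (-1/16) * h4 + (-1/48) * h5 + (-1/6) * ha + (-1/6) * hb + (5/6) * hc + (-2/3) * hj + (-1/3) * hk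
  have hu1 : u 1 = (11/6) + (-1/2) * H₂ := by linear_combination (1/144) * h2 + (1/36) * h3 + (-1/16) * h4 + (-1/48) * h5 + (-1/6) * ha + (5/6) * hb + (-1/6) * hc + (1/3) * hj + (-1/3) * hk
  have hu2 : u 2 = (-1/6) + (-1/2) * H₂ := by linear_combination (1/144) * h2 + (1/36) * h3 + (-1/16) * h4 + (-1/48) * h5 + (5/6) * ha + (-1/6) * hb + (-1/6) * hc + (1/3) * hj + (2/3) * hk
  have hd0 : d 0 = (-29/6) + (3/2) * H₂ := by linear_combination (1/144) * h2 + (13/36) * h3 + (-1/16) * h4 + (-1/48) * h5 + (-1/2) * ha + (-1/2) * hb + (-1/2) * hc + (-1/3) * hd + (-1/3) * he + (2/3) * hf + (-2/3) * hj + (-1/3) * hk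
  have hd1 : d 1 = (-35/6) + (3/2) * H₂ := by linear_combination (1/144) * h2 + (13/36) * h3 + (-1/16) * h4 + (-1/48) * h5 + (-1/2) * ha + (-1/2) * hb + (-1/2) * hc + (-1/3) * hd + (2/3) * he + (-1/3) * hf + (1/3) * hj + (-1/3) * hk
  have hd2 : d 2 = (-35/6) + (3/2) * H₂ := by linear_combination (1/144) * h2 + (13/36) * h3 + (-1/16) * h4 + (-1/48) * h5 + (-1/2) * ha + (-1/2) * hb + (-1/2) * hc + (2/3) * hd + (-1/3) * he + (-1/3) * hf + (1/3) * hj + (2/3) * hk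
  have hL0 : L 0 = (-33/2) + (13/2) * H₂ := by linear_combination (1/16) * h2 + (1/4) * h3 + (7/16) * h4 + (-3/16) * h5 + (-3/2) * ha + (-3/2) * hb + (-3/2) * hc + hl + (-2) * hm + (2) * ho
  have hL1 : L 1 = (0) + (-1) * H₂ := by linear_combination hm + (-1) * ho
  have hL2 : L 2 = (0) + (-1) * H₂ := by linear_combination (-1) * hl + hm + (-1) * ho
  have he0 : e 0 = (95/6) + (-11/2) * H₂ := by linear_combination (5/48) * h2 + (-5/4) * h3 + (1/16) * h4 + (3/16) * h5 + (7/6) * ha + (7/6) * hb + (7/6) * hc + (2/3) * hd + (2/3) * he + (2/3) * hf + (-1) * hg + (-1) * hh + (-1) * hl + (2) * hm + (-2) * ho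
  have he1 : e 1 = (-14/3) + (2) * H₂ := by linear_combination (1/3) * h3 + (-1/3) * ha + (-1/3) * hb + (-1/3) * hc + (-1/3) * hd + (-1/3) * he + (-1/3) * hf + hh + (-1) * hm + ho
  have he2 : e 2 = (-17/3) + (2) * H₂ := by linear_combination (1/3) * h3 + (-1/3) * ha + (-1/3) * hb + (-1/3) * hc + (-1/3) * hd + (-1/3) * he + (-1/3) * hf + hg + hl + (-1) * hm + ho
  have hn0 : ν 0 = (1) + (0) * H₂ := by linear_combination hn
  have hn1 : ν 1 = (0) + (0) * H₂ := by linear_combination ho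
  have hn2 : ν 2 = (0) + (0) * H₂ := by linear_combination hp
  have hH1 : H₁ = (-26/3) + (1) * H₂ := by linear_combination (1/3) * h3 + (-1/3) * ha + (-1/3) * hb + (-1/3) * hc + (-1/3) * hd + (-1/3) * he + (-1/3) * hf

  have hH2 : H₂ = 307/135 := by
    rw [hQ0, hQ1, hQ2, hu0, hu1, hu2, hd0, hd1, hd2, hL0, hL1, hL2, he0, he1, he2] at h1
    linear_combination (-1/45) * h1
  refine ⟨?_, ?_, ?_, ?_, ?_, ?_, by rw [hH1, hH2]; norm_num, hH2⟩ <;>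
    (funext j; fin_cases j) <;>
    simp <;>
    linarith [hQ0, hQ1, hQ2, hu0, hu1, hu2, hd0, hd1, hd2, hL0, hL1, hL2,
      he0, he1, he2, hn0, hn1, hn2, hH2]
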